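/- Let H be a complex Hilbert space and let P, Q be bounded idempotent operators on H (P² = P, Q² = Q). Then there exists a bounded invertible operator V on H (with bounded inverse) such that V P = Q V if and only if there exist a linear isometric equivalence from the range of P onto the range of Q and a linear isometric equivalence from the kernel of P onto the kernel of Q. -/

import Mathlib

set_option maxHeartbeats 1000000
set_option synthInstance.maxHeartbeats 1000000

open ContinuousLinearMap
open scoped InnerProductSpace

/-- A continuous linear equivalence between complex Hilbert spaces yields an isometric one. -/
lemma aux_isometry_of_equiv {E F : Type*} [NormedAddCommGroup E] [InnerProductSpace ℂ E]
    [CompleteSpace E] [NormedAddCommGroup F] [InnerProductSpace ℂ F] [CompleteSpace F]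
    (T : E ≃L[ℂ] F) : Nonempty (E ≃ₗᵢ[ℂ] F) := by
  set Tc : E →L[ℂ] F := (T : E →L[ℂ] F) with hTc
  set A : E →L[ℂ] E := adjoint Tc ∘L Tc with hAdef
  set B : E →L[ℂ] E := (T.symm : F →L[ℂ] E) ∘L adjoint (T.symm : F →L[ℂ] E) with hBdef
  have hTsT : Tc ∘L (T.symm : F →L[ℂ] E) = 1 := by ext x; simp [hTc]
  have hTTs : (T.symm : F →L[ℂ] E) ∘L Tc = 1 := by ext x; simp [hTc]
  have hAB : A * B = 1 := by
    have : A * B = adjoint Tc ∘L ((Tc ∘L (T.symm : F →L[ℂ] E)) ∘L adjoint (T.symm : F →L[ℂ] E)) := by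
      simp only [hAdef, hBdef, mul_def, comp_assoc]
    rw [this, hTsT, one_def, id_comp, ← adjoint_comp, hTTs, one_def, adjoint_id]
  have hBA : B * A = 1 := by
    have : B * A = (T.symm : F →L[ℂ] E) ∘L ((adjoint (T.symm : F →L[ℂ] E) ∘L adjoint Tc) ∘L Tc) := by
      simp only [hAdef, hBdef, mul_def, comp_assoc]
    rw [this, ← adjoint_comp, hTsT, one_def, adjoint_id, ← one_def, one_def, id_comp, hTTs]
  set uA : (E →L[ℂ] E)ˣ := ⟨A, B, hAB, hBA⟩ with huA
  have hApos : 0 ≤ A := by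
    rw [ContinuousLinearMap.nonneg_iff_isPositive]
    have := (isPositive_one (E := F)).conj_adjoint (adjoint Tc)
    simpa [adjoint_adjoint, hAdef, one_def, id_comp] using this
  set S : E →L[ℂ] E := CFC.sqrt A with hSdef
  have hSS : S * S = A := CFC.sqrt_mul_sqrt_self A hApos
  have hSpos : (0 : E →L[ℂ] E) ≤ S := CFC.sqrt_nonneg A
  have hSsa : IsSelfAdjoint S :=
    ((ContinuousLinearMap.nonneg_iff_isPositive S).mp hSpos).isSelfAdjoint
  have hSsym := (ContinuousLinearMap.isSelfAdjoint_iff_isSymmetric).mp hSsa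
  have hcomm : Commute S (uA : E →L[ℂ] E) := by
    show S * A = A * S
    rw [← hSS, mul_assoc]
  have hcomm' : Commute S ((uA⁻¹ : (E →L[ℂ] E)ˣ) : E →L[ℂ] E) := hcomm.units_inv_right
  set Bi : E →L[ℂ] E := ((uA⁻¹ : (E →L[ℂ] E)ˣ) : E →L[ℂ] E) with hBi
  have hSl : S * (Bi * S) = 1 := by
    rw [← mul_assoc, hcomm'.eq, mul_assoc, hSS]
    exact uA.inv_mul
  have hSr : (Bi * S) * S = 1 := by
    rw [mul_assoc, hSS]
    exact uA.inv_mul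
  set uS : (E →L[ℂ] E)ˣ := ⟨S, Bi * S, hSl, hSr⟩ with huS
  set Si : E →L[ℂ] E := Bi * S with hSi
  set L : E →L[ℂ] F := Tc ∘L Si with hLdef
  have hnorm2 : ∀ y : E, ‖Tc y‖ = ‖S y‖ := by
    intro y
    have h1 : (⟪Tc y, Tc y⟫_ℂ) = ⟪S y, S y⟫_ℂ := by
      calc ⟪Tc y, Tc y⟫_ℂ = ⟪adjoint Tc (Tc y), y⟫_ℂ := (adjoint_inner_left Tc y (Tc y)).symm
        _ = ⟪S (S y), y⟫_ℂ := by
            rw [show adjoint Tc (Tc y) = A y from rfl, show A y = S (S y) by rw [← hSS]; rfl]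
        _ = ⟪S y, S y⟫_ℂ := hSsym (S y) y
    have h3 : (‖Tc y‖ : ℝ) ^ 2 = (‖S y‖ : ℝ) ^ 2 := by
      rw [← inner_self_eq_norm_sq (𝕜 := ℂ), ← inner_self_eq_norm_sq (𝕜 := ℂ), h1]
    nlinarith [norm_nonneg (Tc y), norm_nonneg (S y), sq_nonneg (‖Tc y‖ - ‖S y‖)]
  have hLnorm : ∀ x : E, ‖L x‖ = ‖x‖ := by
    intro x
    have : S (Si x) = x := by
      have := congrArg (fun (f : E →L[ℂ] E) => f x) hSl
      simpa [mul_def] using this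
    rw [hLdef]
    calc ‖(Tc ∘L Si) x‖ = ‖Tc (Si x)‖ := rfl
      _ = ‖S (Si x)‖ := hnorm2 _
      _ = ‖x‖ := by rw [this]
  let li : E →ₗᵢ[ℂ] F := ⟨(L : E →ₗ[ℂ] F), fun x => hLnorm x⟩
  have hsurj : Function.Surjective li := by
    intro y
    refine ⟨S (T.symm y), ?_⟩
    have h4 : Si (S (T.symm y)) = T.symm y := by
      have := congrArg (fun (f : E →L[ℂ] E) => f (T.symm y)) hSr
      simpa [mul_def] using this
    show L (S (T.symm y)) = y
    rw [hLdef]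
    calc (Tc ∘L Si) (S (T.symm y)) = Tc (Si (S (T.symm y))) := rfl
      _ = Tc (T.symm y) := by rw [h4]
      _ = y := by simp [hTc]
  exact ⟨LinearIsometryEquiv.ofSurjective li hsurj⟩

section Aux

variable {H : Type*} [NormedAddCommGroup H] [InnerProductSpace ℂ H]

lemma aux_pp {P : H →L[ℂ] H} (hP : P ^ 2 = P) (x : H) : P (P x) = P x := by
  have := congrFun (congrArg DFunLike.coe hP) x
  simpa [pow_two, ContinuousLinearMap.mul_apply] using this

lemma aux_fix {P : H →L[ℂ] H} (hP : P ^ 2 = P) {x : H} (hx : x ∈ LinearMap.range (P : H →ₗ[ℂ] H)) :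
    P x = x := by
  obtain ⟨a, rfl⟩ := hx
  exact aux_pp hP a

lemma aux_ker0 {P : H →L[ℂ] H} {x : H} (hx : x ∈ LinearMap.ker (P : H →ₗ[ℂ] H)) : P x = 0 :=
  LinearMap.mem_ker.mp hx

lemma aux_memker {P : H →L[ℂ] H} (hP : P ^ 2 = P) (x : H) :
    (1 - P) x ∈ LinearMap.ker (P : H →ₗ[ℂ] H) := by
  rw [LinearMap.mem_ker]
  show P ((1 - P) x) = 0
  rw [ContinuousLinearMap.sub_apply, ContinuousLinearMap.one_apply, map_sub, aux_pp hP, sub_self]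

lemma aux_isClosed_range {P : H →L[ℂ] H} (hP : P ^ 2 = P) :
    IsClosed ((LinearMap.range (P : H →ₗ[ℂ] H) : Submodule ℂ H) : Set H) := by
  have hset : ((LinearMap.range (P : H →ₗ[ℂ] H) : Submodule ℂ H) : Set H)
      = ((LinearMap.ker ((1 - P : H →L[ℂ] H) : H →ₗ[ℂ] H) : Submodule ℂ H) : Set H) := by
    ext x
    simp only [SetLike.mem_coe, LinearMap.mem_ker, LinearMap.mem_range]
    constructor
    · rintro ⟨a, rfl⟩
      show (1 - P) (P a) = 0
      rw [ContinuousLinearMap.sub_apply, ContinuousLinearMap.one_apply, aux_pp hP, sub_self]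
    · intro hx
      have hx' : x - P x = 0 := by
        simpa [ContinuousLinearMap.sub_apply] using hx
      rw [sub_eq_zero] at hx'
      exact ⟨x, hx'.symm⟩
  rw [hset]
  exact ContinuousLinearMap.isClosed_ker (1 - P)

/-- The intertwining operator built from isometries on range and kernel. -/
noncomputable def auxV (P Q : H →L[ℂ] H) (hP : P ^ 2 = P)
    (f : (LinearMap.range (P : H →ₗ[ℂ] H)) ≃ₗᵢ[ℂ] (LinearMap.range (Q : H →ₗ[ℂ] H)))
    (g : (LinearMap.ker (P : H →ₗ[ℂ] H)) ≃ₗᵢ[ℂ] (LinearMap.ker (Q : H →ₗ[ℂ] H))) : H →L[ℂ] H :=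
  (LinearMap.range (Q : H →ₗ[ℂ] H)).subtypeL ∘L
      ((f.toContinuousLinearEquiv : (LinearMap.range (P : H →ₗ[ℂ] H)) →L[ℂ] (LinearMap.range (Q : H →ₗ[ℂ] H))) ∘L
        (P.codRestrict _ fun x => LinearMap.mem_range_self _ x)) +
    (LinearMap.ker (Q : H →ₗ[ℂ] H)).subtypeL ∘L
      ((g.toContinuousLinearEquiv : (LinearMap.ker (P : H →ₗ[ℂ] H)) →L[ℂ] (LinearMap.ker (Q : H →ₗ[ℂ] H))) ∘L
        ((1 - P).codRestrict _ fun x => aux_memker hP x))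

lemma auxV_apply (P Q : H →L[ℂ] H) (hP : P ^ 2 = P)
    (f : (LinearMap.range (P : H →ₗ[ℂ] H)) ≃ₗᵢ[ℂ] (LinearMap.range (Q : H →ₗ[ℂ] H)))
    (g : (LinearMap.ker (P : H →ₗ[ℂ] H)) ≃ₗᵢ[ℂ] (LinearMap.ker (Q : H →ₗ[ℂ] H))) (x : H) :
    auxV P Q hP f g x
      = ↑(f ⟨P x, LinearMap.mem_range_self _ x⟩) + ↑(g ⟨(1 - P) x, aux_memker hP x⟩) := rfl

lemma aux_sum1 {Q : H →L[ℂ] H} (hQ : Q ^ 2 = Q)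
    (a : LinearMap.range (Q : H →ₗ[ℂ] H)) (b : LinearMap.ker (Q : H →ₗ[ℂ] H)) :
    Q ((a : H) + (b : H)) = (a : H) := by
  rw [map_add, aux_fix hQ a.2, aux_ker0 b.2, add_zero]

lemma aux_sum2 {Q : H →L[ℂ] H} (hQ : Q ^ 2 = Q)
    (a : LinearMap.range (Q : H →ₗ[ℂ] H)) (b : LinearMap.ker (Q : H →ₗ[ℂ] H)) :
    (1 - Q) ((a : H) + (b : H)) = (b : H) := by
  rw [ContinuousLinearMap.sub_apply, ContinuousLinearMap.one_apply, aux_sum1 hQ]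
  abel

lemma auxV_comm (P Q : H →L[ℂ] H) (hP : P ^ 2 = P) (hQ : Q ^ 2 = Q)
    (f : (LinearMap.range (P : H →ₗ[ℂ] H)) ≃ₗᵢ[ℂ] (LinearMap.range (Q : H →ₗ[ℂ] H)))
    (g : (LinearMap.ker (P : H →ₗ[ℂ] H)) ≃ₗᵢ[ℂ] (LinearMap.ker (Q : H →ₗ[ℂ] H))) :
    auxV P Q hP f g * P = Q * auxV P Q hP f g := by
  ext x
  show auxV P Q hP f g (P x) = Q (auxV P Q hP f g x)
  rw [auxV_apply, auxV_apply, aux_sum1 hQ]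
  have h1 : (⟨P (P x), LinearMap.mem_range_self _ (P x)⟩ : LinearMap.range (P : H →ₗ[ℂ] H))
      = ⟨P x, LinearMap.mem_range_self _ x⟩ := Subtype.ext (aux_pp hP x)
  have h2 : (⟨(1 - P) (P x), aux_memker hP (P x)⟩ : LinearMap.ker (P : H →ₗ[ℂ] H)) = 0 := by
    apply Subtype.ext
    show (1 - P) (P x) = 0
    rw [ContinuousLinearMap.sub_apply, ContinuousLinearMap.one_apply, aux_pp hP, sub_self]
  rw [h1, h2, map_zero]
  simp

lemma auxV_inv (P Q : H →L[ℂ] H) (hP : P ^ 2 = P) (hQ : Q ^ 2 = Q)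
    (f : (LinearMap.range (P : H →ₗ[ℂ] H)) ≃ₗᵢ[ℂ] (LinearMap.range (Q : H →ₗ[ℂ] H)))
    (g : (LinearMap.ker (P : H →ₗ[ℂ] H)) ≃ₗᵢ[ℂ] (LinearMap.ker (Q : H →ₗ[ℂ] H))) :
    auxV Q P hQ f.symm g.symm * auxV P Q hP f g = 1 := by
  ext x
  show auxV Q P hQ f.symm g.symm (auxV P Q hP f g x) = x
  rw [auxV_apply Q P hQ f.symm g.symm]
  have ha : (⟨Q (auxV P Q hP f g x), LinearMap.mem_range_self _ _⟩ : LinearMap.range (Q : H →ₗ[ℂ] H))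
      = f ⟨P x, LinearMap.mem_range_self _ x⟩ := by
    apply Subtype.ext
    show Q (auxV P Q hP f g x) = ↑(f ⟨P x, LinearMap.mem_range_self _ x⟩)
    rw [auxV_apply]
    exact aux_sum1 hQ _ _
  have hb : (⟨(1 - Q) (auxV P Q hP f g x), aux_memker hQ _⟩ : LinearMap.ker (Q : H →ₗ[ℂ] H))
      = g ⟨(1 - P) x, aux_memker hP x⟩ := by
    apply Subtype.ext
    show (1 - Q) (auxV P Q hP f g x) = ↑(g ⟨(1 - P) x, aux_memker hP x⟩)
    rw [auxV_apply]
    exact aux_sum2 hQ _ _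
  rw [ha, hb, LinearIsometryEquiv.symm_apply_apply, LinearIsometryEquiv.symm_apply_apply]
  show P x + (1 - P) x = x
  rw [ContinuousLinearMap.sub_apply, ContinuousLinearMap.one_apply]
  abel

end Aux

/-- For bounded idempotents `P, Q` on a complex Hilbert space, there is a bounded invertible
operator `V` (with bounded inverse) such that `V P = Q V` iff the range of `P` is isometrically
isomorphic to the range of `Q` and the kernel of `P` is isometrically isomorphic to the kernel
of `Q`. -/
theorem stmt_9 {H : Type*} [NormedAddCommGroup H] [InnerProductSpace ℂ H] [CompleteSpace H]
    (P Q : H →L[ℂ] H) (hP : P ^ 2 = P) (hQ : Q ^ 2 = Q) :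
    (∃ V : (H →L[ℂ] H)ˣ, (V : H →L[ℂ] H) * P = Q * (V : H →L[ℂ] H)) ↔
      (Nonempty ((LinearMap.range (P : H →ₗ[ℂ] H)) ≃ₗᵢ[ℂ] (LinearMap.range (Q : H →ₗ[ℂ] H))) ∧
        Nonempty ((LinearMap.ker (P : H →ₗ[ℂ] H)) ≃ₗᵢ[ℂ] (LinearMap.ker (Q : H →ₗ[ℂ] H)))) := by
  haveI iRP : CompleteSpace (LinearMap.range (P : H →ₗ[ℂ] H)) := (aux_isClosed_range hP).completeSpace_coe
  haveI iRQ : CompleteSpace (LinearMap.range (Q : H →ₗ[ℂ] H)) := (aux_isClosed_range hQ).completeSpace_coe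
  haveI iKP : CompleteSpace (LinearMap.ker (P : H →ₗ[ℂ] H)) :=
    (ContinuousLinearMap.isClosed_ker P).completeSpace_coe
  haveI iKQ : CompleteSpace (LinearMap.ker (Q : H →ₗ[ℂ] H)) :=
    (ContinuousLinearMap.isClosed_ker Q).completeSpace_coe
  constructor
  · rintro ⟨V, hV⟩
    set Vc : H →L[ℂ] H := (V : H →L[ℂ] H) with hVc
    set Wc : H →L[ℂ] H := ((V⁻¹ : (H →L[ℂ] H)ˣ) : H →L[ℂ] H) with hWc
    have hVpt : ∀ x, Vc (P x) = Q (Vc x) := by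
      intro x
      have := congrFun (congrArg DFunLike.coe hV) x
      simpa [ContinuousLinearMap.mul_apply] using this
    have cancel1 : ∀ y, Vc (Wc y) = y := by
      intro y
      have := congrFun (congrArg DFunLike.coe V.mul_inv) y
      simpa only [ContinuousLinearMap.mul_apply, ContinuousLinearMap.one_apply] using this
    have cancel2 : ∀ y, Wc (Vc y) = y := by
      intro y
      have := congrFun (congrArg DFunLike.coe V.inv_mul) y
      simpa only [ContinuousLinearMap.mul_apply, ContinuousLinearMap.one_apply] using this
    have hWpt : ∀ x, Wc (Q x) = P (Wc x) := by
      intro x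
      calc Wc (Q x) = Wc (Q (Vc (Wc x))) := by rw [cancel1]
        _ = Wc (Vc (P (Wc x))) := by rw [← hVpt]
        _ = P (Wc x) := cancel2 _
    have hmem1 : ∀ x : LinearMap.range (P : H →ₗ[ℂ] H), (Vc ∘L (LinearMap.range (P : H →ₗ[ℂ] H)).subtypeL) x
        ∈ LinearMap.range (Q : H →ₗ[ℂ] H) := by
      intro x
      refine ⟨Vc ↑x, ?_⟩
      show Q (Vc ↑x) = Vc ↑x
      rw [← hVpt, aux_fix hP x.2]
    have hmem2 : ∀ y : LinearMap.range (Q : H →ₗ[ℂ] H), (Wc ∘L (LinearMap.range (Q : H →ₗ[ℂ] H)).subtypeL) y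
        ∈ LinearMap.range (P : H →ₗ[ℂ] H) := by
      intro y
      refine ⟨Wc ↑y, ?_⟩
      show P (Wc ↑y) = Wc ↑y
      rw [← hWpt, aux_fix hQ y.2]
    have hmem3 : ∀ x : LinearMap.ker (P : H →ₗ[ℂ] H), (Vc ∘L (LinearMap.ker (P : H →ₗ[ℂ] H)).subtypeL) x
        ∈ LinearMap.ker (Q : H →ₗ[ℂ] H) := by
      intro x
      rw [LinearMap.mem_ker]
      show Q (Vc ↑x) = 0
      rw [← hVpt, aux_ker0 x.2, map_zero]
    have hmem4 : ∀ y : LinearMap.ker (Q : H →ₗ[ℂ] H), (Wc ∘L (LinearMap.ker (Q : H →ₗ[ℂ] H)).subtypeL) y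
        ∈ LinearMap.ker (P : H →ₗ[ℂ] H) := by
      intro y
      rw [LinearMap.mem_ker]
      show P (Wc ↑y) = 0
      rw [← hWpt, aux_ker0 y.2, map_zero]
    let er : (LinearMap.range (P : H →ₗ[ℂ] H)) ≃L[ℂ] (LinearMap.range (Q : H →ₗ[ℂ] H)) :=
      ContinuousLinearEquiv.equivOfInverse
        ((Vc ∘L (LinearMap.range (P : H →ₗ[ℂ] H)).subtypeL).codRestrict _ hmem1)
        ((Wc ∘L (LinearMap.range (Q : H →ₗ[ℂ] H)).subtypeL).codRestrict _ hmem2)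
        (fun x => Subtype.ext (cancel2 ↑x)) (fun y => Subtype.ext (cancel1 ↑y))
    let ek : (LinearMap.ker (P : H →ₗ[ℂ] H)) ≃L[ℂ] (LinearMap.ker (Q : H →ₗ[ℂ] H)) :=
      ContinuousLinearEquiv.equivOfInverse
        ((Vc ∘L (LinearMap.ker (P : H →ₗ[ℂ] H)).subtypeL).codRestrict _ hmem3)
        ((Wc ∘L (LinearMap.ker (Q : H →ₗ[ℂ] H)).subtypeL).codRestrict _ hmem4)
        (fun x => Subtype.ext (cancel2 ↑x)) (fun y => Subtype.ext (cancel1 ↑y))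
    exact ⟨aux_isometry_of_equiv er, aux_isometry_of_equiv ek⟩
  · rintro ⟨⟨f⟩, ⟨g⟩⟩
    refine ⟨⟨auxV P Q hP f g, auxV Q P hQ f.symm g.symm, ?_, auxV_inv P Q hP hQ f g⟩,
      auxV_comm P Q hP hQ f g⟩
    have := auxV_inv Q P hQ hP f.symm g.symm
    simpa using this
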